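/- Let j ≥ 3 be an integer, let G be a simple graph, and let E_s, E_t ⊆ E(G) be edge subsets each forming a star with j leaves, with centers c_s and c_t respectively. Then there exists a reconfiguration sequence under the TJ rule from E_s to E_t in which every edge subset forms a star with j leaves if and only if c_s = c_t. -/

import Mathlib

namespace Stmt7

variable {V : Type*}

/-- `E' ⊆ E(G)` and the subgraph formed by `E'` is a star `K_{1,j}` with `j` leaves
whose center is `c`: its edges are exactly the edges joining `c` to each of `j` leaves. -/
def FormsStar (G : SimpleGraph V) (j : ℕ) (c : V) (E' : Set (Sym2 V)) : Prop :=
  E' ⊆ G.edgeSet ∧ ∃ Lv : Set V, Lv.ncard = j ∧ c ∉ Lv ∧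
    ∀ e, e ∈ E' ↔ ∃ v ∈ Lv, e = s(c, v)

/-- A single token-jumping (TJ) step on edge subsets of `G`. -/
def TJStepE (G : SimpleGraph V) (E1 E2 : Set (Sym2 V)) : Prop :=
  ∃ em ep, em ∈ E1 ∧ ep ∈ G.edgeSet ∧ ep ∉ E1 ∧ E2 = (E1 \ {em}) ∪ {ep}

/-- There is a reconfiguration sequence under the TJ rule from `Es` to `Et` in which
every edge subset satisfies the property `P`. -/
def TJReachE (G : SimpleGraph V) (P : Set (Sym2 V) → Prop) (Es Et : Set (Sym2 V)) : Prop :=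
  ∃ (l : ℕ) (f : ℕ → Set (Sym2 V)), f 0 = Es ∧ f l = Et ∧
    (∀ k ≤ l, P (f k)) ∧ ∀ k < l, TJStepE G (f k) (f (k + 1))

/-- If two distinct "spokes" at `c1` lie in a star centered at `c2`, the centers agree. -/
lemma center_eq_of_two_edges {G : SimpleGraph V} {j : ℕ} {c1 c2 : V} {E2 : Set (Sym2 V)}
    (h2 : FormsStar G j c2 E2) {x y : V} (hxy : x ≠ y)
    (hx : s(c1, x) ∈ E2) (hy : s(c1, y) ∈ E2) : c1 = c2 := by
  obtain ⟨-, Lv, -, -, hch⟩ := h2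
  by_contra hne
  have hcx : c2 = x := by
    obtain ⟨w, -, hw⟩ := (hch _).1 hx
    have : c2 ∈ s(c1, x) := by rw [hw]; exact Sym2.mem_mk_left _ _
    rcases Sym2.mem_iff.1 this with h | h
    · exact absurd h.symm hne
    · exact h
  have hcy : c2 = y := by
    obtain ⟨w, -, hw⟩ := (hch _).1 hy
    have : c2 ∈ s(c1, y) := by rw [hw]; exact Sym2.mem_mk_left _ _
    rcases Sym2.mem_iff.1 this with h | h
    · exact absurd h.symm hne
    · exact h
  exact hxy (hcx ▸ hcy)

lemma star_edge_mem {c : V} {Lv : Set V} (hc : c ∉ Lv)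
    {E' : Set (Sym2 V)} (hE : ∀ e, e ∈ E' ↔ ∃ v ∈ Lv, e = s(c, v)) {v : V} (_hv : v ≠ c) :
    s(c, v) ∈ E' ↔ v ∈ Lv := by
  constructor
  · intro h
    obtain ⟨u, hu, he⟩ := (hE _).1 h
    rcases Sym2.eq_iff.1 he with ⟨-, h2⟩ | ⟨h1, -⟩
    · exact h2 ▸ hu
    · exact absurd h1.symm (fun h => hc (h ▸ hu))
  · intro h; exact (hE _).2 ⟨v, h, rfl⟩

lemma center_unique [Fintype V] {G : SimpleGraph V} {j : ℕ} (hj : 2 ≤ j) {c1 c2 : V}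
    {E' : Set (Sym2 V)} (h1 : FormsStar G j c1 E') (h2 : FormsStar G j c2 E') : c1 = c2 := by
  obtain ⟨-, Lv, hcard, hc, hch⟩ := h1
  have : 1 < Lv.ncard := by omega
  obtain ⟨x, hx, y, hy, hxy⟩ := (Set.one_lt_ncard (Set.toFinite _)).1 this
  exact center_eq_of_two_edges h2 hxy ((hch _).2 ⟨x, hx, rfl⟩) ((hch _).2 ⟨y, hy, rfl⟩)

lemma step_center [Fintype V] {G : SimpleGraph V} {j : ℕ} (hj : 3 ≤ j) {c1 c2 : V}
    {E1 E2 : Set (Sym2 V)} (h1 : FormsStar G j c1 E1) (h2 : FormsStar G j c2 E2)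
    (hstep : TJStepE G E1 E2) : c1 = c2 := by
  obtain ⟨-, Lv, hcard, hc, hch⟩ := h1
  obtain ⟨em, ep, hem, -, -, hE2⟩ := hstep
  have : 2 < Lv.ncard := by omega
  obtain ⟨a, ha, b, hb, d, hd, hab, had, hbd⟩ := (Set.two_lt_ncard (Set.toFinite _)).1 this
  have hmem : ∀ x ∈ Lv, s(c1, x) ≠ em → s(c1, x) ∈ E2 := fun x hx hne => by
    rw [hE2]; exact Or.inl ⟨(hch _).2 ⟨x, hx, rfl⟩, hne⟩
  by_cases hea : s(c1, a) = em
  · have hbne : s(c1, b) ≠ em := fun h => by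
      rw [← hea] at h
      rcases Sym2.eq_iff.1 h with ⟨-, h2⟩ | ⟨h1', -⟩
      · exact hab h2.symm
      · exact hc (by rw [h1']; exact ha)
    have hdne : s(c1, d) ≠ em := fun h => by
      rw [← hea] at h
      rcases Sym2.eq_iff.1 h with ⟨-, h2⟩ | ⟨h1', -⟩
      · exact had h2.symm
      · exact hc (by rw [h1']; exact ha)
    exact center_eq_of_two_edges h2 hbd (hmem b hb hbne) (hmem d hd hdne)
  · by_cases heb : s(c1, b) = em
    · have hdne : s(c1, d) ≠ em := fun h => by
        rw [← heb] at h
        rcases Sym2.eq_iff.1 h with ⟨-, h2⟩ | ⟨h1', -⟩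
        · exact hbd h2.symm
        · exact hc (by rw [h1']; exact hb)
      exact center_eq_of_two_edges h2 had (hmem a ha hea) (hmem d hd hdne)
    · exact center_eq_of_two_edges h2 hab (hmem a ha hea) (hmem b hb heb)

lemma reach_refl {G : SimpleGraph V} {P : Set (Sym2 V) → Prop} {E : Set (Sym2 V)}
    (hP : P E) : TJReachE G P E E :=
  ⟨0, fun _ => E, rfl, rfl, fun _ _ => hP, fun k hk => absurd hk (Nat.not_lt_zero k)⟩

lemma reach_cons {G : SimpleGraph V} {P : Set (Sym2 V) → Prop} {E1 E2 E3 : Set (Sym2 V)}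
    (hP : P E1) (hstep : TJStepE G E1 E2) (h23 : TJReachE G P E2 E3) :
    TJReachE G P E1 E3 := by
  obtain ⟨l, f, h0, hl, hPf, hstepf⟩ := h23
  refine ⟨l + 1, fun k => if k = 0 then E1 else f (k - 1), by simp, by simp [hl], ?_, ?_⟩
  · intro k hk
    by_cases hk0 : k = 0
    · simp [hk0, hP]
    · simp only [hk0, if_neg]
      exact hPf (k - 1) (by omega)
  · intro k hk
    by_cases hk0 : k = 0
    · subst hk0
      simpa [h0] using hstep
    · show TJStepE G (if k = 0 then E1 else f (k - 1))
        (if k + 1 = 0 then E1 else f (k + 1 - 1))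
      rw [if_neg hk0, if_neg (Nat.succ_ne_zero k), Nat.add_sub_cancel]
      have := hstepf (k - 1) (by omega)
      rwa [show k - 1 + 1 = k by omega] at this

lemma star_eq {c : V} {Lv : Set V} {E1 E2 : Set (Sym2 V)}
    (h1 : ∀ e, e ∈ E1 ↔ ∃ v ∈ Lv, e = s(c, v))
    (h2 : ∀ e, e ∈ E2 ↔ ∃ v ∈ Lv, e = s(c, v)) : E1 = E2 := by
  ext e; rw [h1, h2]

lemma reach_same_center [Fintype V] {G : SimpleGraph V} {j : ℕ} (hj : 3 ≤ j) {c : V}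
    {Et : Set (Sym2 V)} {Lt : Set V} (htc : Lt.ncard = j) (htcn : c ∉ Lt)
    (htch : ∀ e, e ∈ Et ↔ ∃ v ∈ Lt, e = s(c, v)) (htE : Et ⊆ G.edgeSet) :
    ∀ (n : ℕ) (Es : Set (Sym2 V)) (Ls : Set V), Es ⊆ G.edgeSet → Ls.ncard = j → c ∉ Ls →
      (∀ e, e ∈ Es ↔ ∃ v ∈ Ls, e = s(c, v)) → (Ls \ Lt).ncard = n →
      TJReachE G (fun E' => ∃ c', FormsStar G j c' E') Es Et := by
  intro n
  induction n with
  | zero =>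
    intro Es Ls hsE hsc hscn hsch hdiff
    have hempty : Ls \ Lt = ∅ := (Set.ncard_eq_zero (Set.toFinite _)).1 hdiff
    have hsub : Ls ⊆ Lt := by
      intro x hx
      by_contra hxt
      exact absurd (Set.mem_diff_of_mem hx hxt) (hempty ▸ Set.notMem_empty x)
    have hLeq : Ls = Lt := Set.eq_of_subset_of_ncard_le hsub (by omega) (Set.toFinite _)
    have : Es = Et := star_eq hsch (hLeq ▸ htch)
    exact this ▸ reach_refl ⟨c, hsE, Ls, hsc, hscn, hsch⟩
  | succ n ih =>
    intro Es Ls hsE hsc hscn hsch hdiff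
    have hne : (Ls \ Lt).Nonempty := by
      rw [← Set.ncard_pos (Set.toFinite _)]; omega
    obtain ⟨v, hvs, hvt⟩ := hne
    have hne2 : (Lt \ Ls).Nonempty := by
      by_contra h
      rw [Set.not_nonempty_iff_eq_empty, Set.diff_eq_empty] at h
      have : Lt = Ls := Set.eq_of_subset_of_ncard_le h (by omega) (Set.toFinite _)
      exact hvt (this ▸ hvs)
    obtain ⟨w, hws, hwn⟩ := hne2
    have hvc : v ≠ c := fun h => hscn (h ▸ hvs)
    have hwc : w ≠ c := fun h => htcn (h ▸ hws)
    have hwLs : w ∉ Ls := hwn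
    set Ls' : Set V := insert w (Ls \ {v}) with hLs'
    set Es' : Set (Sym2 V) := (Es \ {s(c, v)}) ∪ {s(c, w)} with hEs'
    have hwedge : s(c, w) ∈ G.edgeSet := htE ((htch _).2 ⟨w, hws, rfl⟩)
    have hwnotEs : s(c, w) ∉ Es := fun h => hwLs ((star_edge_mem hscn hsch hwc).1 h)
    have hstep : TJStepE G Es Es' :=
      ⟨s(c, v), s(c, w), (hsch _).2 ⟨v, hvs, rfl⟩, hwedge, hwnotEs, rfl⟩
    have hcn' : c ∉ Ls' := by
      intro h
      rcases Set.mem_insert_iff.1 h with rfl | ⟨h1, -⟩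
      · exact htcn hws
      · exact hscn h1
    have hcard' : Ls'.ncard = j := by
      rw [hLs', Set.ncard_insert_of_notMem (by simp [hwLs]) (Set.toFinite _),
        Set.ncard_diff_singleton_of_mem hvs, hsc]
      omega
    have hch' : ∀ e, e ∈ Es' ↔ ∃ u ∈ Ls', e = s(c, u) := by
      intro e
      constructor
      · rintro (⟨he, hne⟩ | he)
        · obtain ⟨u, hu, rfl⟩ := (hsch _).1 he
          refine ⟨u, Set.mem_insert_of_mem _ ⟨hu, ?_⟩, rfl⟩
          simp only [Set.mem_singleton_iff]
          rintro rfl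
          exact hne rfl
        · exact ⟨w, Set.mem_insert _ _, he⟩
      · rintro ⟨u, hu, rfl⟩
        rcases Set.mem_insert_iff.1 hu with rfl | ⟨hu1, hu2⟩
        · exact Or.inr rfl
        · refine Or.inl ⟨(hsch _).2 ⟨u, hu1, rfl⟩, fun hmem => ?_⟩
          rw [Set.mem_singleton_iff, Sym2.eq_iff] at hmem
          rcases hmem with ⟨-, h2⟩ | ⟨h1, -⟩
          · exact hu2 (Set.mem_singleton_iff.2 h2)
          · exact hvc h1.symm
    have hsE' : Es' ⊆ G.edgeSet := by
      rintro e (⟨he, -⟩ | he)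
      · exact hsE he
      · exact he ▸ hwedge
    have hdiff' : (Ls' \ Lt).ncard = n := by
      have : Ls' \ Lt = (Ls \ Lt) \ {v} := by
        rw [hLs']
        ext x
        simp only [Set.mem_insert_iff, Set.mem_diff, Set.mem_singleton_iff]
        constructor
        · rintro ⟨rfl | ⟨h1, h2⟩, h3⟩
          · exact absurd hws h3
          · exact ⟨⟨h1, h3⟩, h2⟩
        · rintro ⟨⟨h1, h3⟩, h2⟩
          exact ⟨Or.inr ⟨h1, h2⟩, h3⟩
      rw [this, Set.ncard_diff_singleton_of_mem (Set.mem_diff_of_mem hvs hvt), hdiff]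
      omega
    exact reach_cons ⟨c, hsE, Ls, hsc, hscn, hsch⟩ hstep
      (ih Es' Ls' hsE' hcard' hcn' hch' hdiff')

theorem stmt7 [Fintype V] (j : ℕ) (hj : 3 ≤ j) (G : SimpleGraph V)
    (Es Et : Set (Sym2 V)) (cs ct : V)
    (hs : FormsStar G j cs Es) (ht : FormsStar G j ct Et) :
    TJReachE G (fun E' => ∃ c, FormsStar G j c E') Es Et ↔ cs = ct := by
  constructor
  · rintro ⟨l, f, h0, hl, hP, hstep⟩
    have key : ∀ k ≤ l, FormsStar G j cs (f k) := by
      intro k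
      induction k with
      | zero => intro _; exact h0 ▸ hs
      | succ k ihk =>
        intro hk
        have hk' : k ≤ l := by omega
        obtain ⟨c', hc'⟩ := hP (k + 1) hk
        have := step_center hj (ihk hk') hc' (hstep k (by omega))
        exact this ▸ hc'
    have : FormsStar G j cs Et := hl ▸ key l le_rfl
    exact center_unique (by omega) this ht
  · rintro rfl
    obtain ⟨htE, Lt, htc, htcn, htch⟩ := ht
    obtain ⟨hsE, Ls, hsc, hscn, hsch⟩ := hs
    exact reach_same_center hj htc htcn htch htE (Ls \ Lt).ncard Es Ls hsE hsc hscn hsch rfl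

end Stmt7
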